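/- Let m ≤ n be coprime positive integers and r a positive integer. Let m₁,…,m_k, n₁,…,n_ℓ be a pair of partitions of (rm, rn) into positive parts with gcd-sum Σ = Σ_{i,j} gcd(m_i,n_j), and m'₁,…,m'_{k'}, n'₁,…,n'_{ℓ'} a second pair of partitions of (rm, rn) into positive parts with gcd-sum Σ'. Suppose Σ + Σ' = (ℓ+ℓ'−2)·rm + (k+k'−2)·rn (the genus-one condition δ₀ + δ_∞ = 2δ_max − r), and suppose Σ − ℓ·rm − k·rn ≥ Σ' − ℓ'·rm − k'·rn (i.e. δ₀ ≥ δ_∞). Then either (a) r is even and Σ = (ℓ−1)rm + (k−1)rn and Σ' = (ℓ'−1)rm + (k'−1)rn (i.e. δ₀ = δ_∞ = δ_max − r/2), or (b) Σ = (ℓ−1)rm + (k−1)rn + r and Σ' = (ℓ'−1)rm + (k'−1)rn − r (i.e. δ₀ = δ_max and δ_∞ = δ_max − r). -/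

import Mathlib

lemma gcd_parity (x y : ℕ) : (Nat.gcd x y + x * y + x + y) % 2 = 0 := by
  have hxy : (x * y) % 2 = (x % 2) * (y % 2) % 2 := Nat.mul_mod x y 2
  rcases Nat.mod_two_eq_zero_or_one x with hx | hx <;>
    rcases Nat.mod_two_eq_zero_or_one y with hy | hy <;>
    rw [hx, hy] at hxy <;> norm_num at hxy
  · -- both even
    have h2 : 2 ∣ Nat.gcd x y := Nat.dvd_gcd (by omega) (by omega)
    omega
  · -- x even y odd : gcd odd since gcd ∣ y
    have h2 : ¬ (2 ∣ Nat.gcd x y) := fun h => by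
      have := h.trans (Nat.gcd_dvd_right x y); omega
    omega
  · have h2 : ¬ (2 ∣ Nat.gcd x y) := fun h => by
      have := h.trans (Nat.gcd_dvd_left x y); omega
    omega
  · have h2 : ¬ (2 ∣ Nat.gcd x y) := fun h => by
      have := h.trans (Nat.gcd_dvd_left x y); omega
    omega

lemma key1 (A B r l : ℕ) (hA : 0 < A) (b : Fin l → ℕ) (hb : ∀ j, 0 < b j)
    (hsb : ∑ j, b j = B) (hgcd : Nat.gcd A B = r) :
    (∑ j, Nat.gcd A (b j)) + A ≤ l * A ∨ (∑ j, Nat.gcd A (b j)) + A = l * A + r := by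
  classical
  set c : Fin l → ℕ := fun j => Nat.gcd A (b j) with hc
  have hcA : ∀ j, c j ≤ A := fun j => Nat.gcd_le_left _ hA
  have hcd : ∀ j, c j ∣ A := fun j => Nat.gcd_dvd_left _ _
  show (∑ j, c j) + A ≤ l * A ∨ (∑ j, c j) + A = l * A + r
  set Bs := Finset.univ.filter (fun j => ¬ A ∣ b j) with hBs
  have hhalf : ∀ j ∈ Bs, 2 * c j ≤ A := by
    intro j hj
    have hnd : ¬ A ∣ b j := (Finset.mem_filter.mp hj).2
    have hne : c j ≠ A := fun h => hnd (h ▸ Nat.gcd_dvd_right A (b j))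
    obtain ⟨t, ht⟩ := hcd j
    have hcpos : 0 < c j := Nat.gcd_pos_of_pos_left _ hA
    have ht2 : 2 ≤ t := by
      rcases t with _ | _ | t
      · omega
      · exfalso; exact hne (by omega)
      · omega
    calc 2 * c j ≤ t * c j := Nat.mul_le_mul_right _ ht2
    _ = A := by rw [ht]; ring
  rcases Nat.lt_or_ge Bs.card 2 with hcard | hcard
  · interval_cases h : Bs.card
    · -- all divisible
      have hall : ∀ j, A ∣ b j := by
        intro j
        by_contra hnd
        have : j ∈ Bs := Finset.mem_filter.mpr ⟨Finset.mem_univ j, hnd⟩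
        rw [Finset.card_eq_zero] at h
        simp [h] at this
      have hcj : ∀ j, c j = A := fun j => Nat.gcd_eq_left (hall j)
      have hS : ∑ j, c j = l * A := by
        rw [Finset.sum_congr rfl (fun j _ => hcj j)]
        simp [Finset.sum_const, Finset.card_univ, Nat.smul_one_eq_cast]
      have hAB : A ∣ B := hsb ▸ Finset.dvd_sum (fun j _ => hall j)
      have hrA : r = A := by rw [← hgcd, Nat.gcd_eq_left hAB]
      right; omega
    · -- exactly one bad index
      obtain ⟨j0, hj0⟩ := Finset.card_eq_one.mp h
      have hmem : ∀ j, j ≠ j0 → A ∣ b j := by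
        intro j hne
        by_contra hnd
        have : j ∈ Bs := Finset.mem_filter.mpr ⟨Finset.mem_univ j, hnd⟩
        rw [hj0, Finset.mem_singleton] at this; exact hne this
      have hrest : A ∣ ∑ j ∈ Finset.univ.erase j0, b j :=
        Finset.dvd_sum (fun j hj => hmem j (Finset.ne_of_mem_erase hj))
      have hsplit : b j0 + ∑ j ∈ Finset.univ.erase j0, b j = B := by
        rw [← hsb]; exact Finset.add_sum_erase _ b (Finset.mem_univ j0)
      have hcj0 : c j0 = r := by
        apply Nat.dvd_antisymm
        · -- c j0 ∣ gcd A B = r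
          rw [← hgcd]
          refine Nat.dvd_gcd (hcd j0) ?_
          have h1 : c j0 ∣ b j0 := Nat.gcd_dvd_right _ _
          have h2 : c j0 ∣ ∑ j ∈ Finset.univ.erase j0, b j := (hcd j0).trans hrest
          exact hsplit ▸ Nat.dvd_add h1 h2
        · refine Nat.dvd_gcd (hgcd ▸ Nat.gcd_dvd_left A B) ?_
          have h1 : r ∣ B := hgcd ▸ Nat.gcd_dvd_right A B
          have h2 : r ∣ ∑ j ∈ Finset.univ.erase j0, b j :=
            (hgcd ▸ Nat.gcd_dvd_left A B).trans hrest
          have := Nat.dvd_sub h1 h2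
          rwa [show B - ∑ j ∈ Finset.univ.erase j0, b j = b j0 by omega] at this
      have hrestc : ∑ j ∈ Finset.univ.erase j0, c j = (l - 1) * A := by
        rw [Finset.sum_congr rfl (fun j hj => Nat.gcd_eq_left (hmem j (Finset.ne_of_mem_erase hj)))]
        rw [Finset.sum_const, Finset.card_erase_of_mem (Finset.mem_univ j0),
          Finset.card_univ, Fintype.card_fin, smul_eq_mul]
      have hl : 1 ≤ l := by have := j0; exact Fin.pos j0
      have hSsplit : ∑ j, c j = c j0 + ∑ j ∈ Finset.univ.erase j0, c j :=
        (Finset.add_sum_erase _ c (Finset.mem_univ j0)).symm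
      right
      rw [hSsplit, hcj0, hrestc]
      have : (l - 1) * A + A = l * A := by
        rw [← Nat.succ_pred_eq_of_pos hl, Nat.succ_mul]; simp [Nat.pred_eq_sub_one]
      have hrA : r ≤ A := hgcd ▸ Nat.gcd_le_left B hA
      omega
  · -- at least two bad indices
    obtain ⟨j1, hj1, j2, hj2, hne⟩ := Finset.one_lt_card.mp hcard
    left
    have h1 : 2 * c j1 ≤ A := hhalf j1 hj1
    have h2 : 2 * c j2 ≤ A := hhalf j2 hj2
    have hj2' : j2 ∈ Finset.univ.erase j1 := Finset.mem_erase.mpr ⟨hne.symm, Finset.mem_univ _⟩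
    have hs1 : ∑ j, c j = c j1 + ∑ j ∈ Finset.univ.erase j1, c j :=
      (Finset.add_sum_erase _ c (Finset.mem_univ j1)).symm
    have hs2 : ∑ j ∈ Finset.univ.erase j1, c j
        = c j2 + ∑ j ∈ (Finset.univ.erase j1).erase j2, c j :=
      (Finset.add_sum_erase _ c hj2').symm
    have hbound : ∑ j ∈ (Finset.univ.erase j1).erase j2, c j ≤ (l - 2) * A := by
      have := Finset.sum_le_card_nsmul ((Finset.univ.erase j1).erase j2) c A
        (fun j _ => hcA j)
      rwa [Finset.card_erase_of_mem hj2', Finset.card_erase_of_mem (Finset.mem_univ j1),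
        Finset.card_univ, Fintype.card_fin, smul_eq_mul,
        show l - 1 - 1 = l - 2 from by omega] at this
    have hl : 2 ≤ l := by
      have : 1 < Fintype.card (Fin l) := by
        calc 1 < Bs.card := hcard
        _ ≤ Finset.univ.card := Finset.card_le_card (Finset.filter_subset _ _)
        _ = Fintype.card (Fin l) := Finset.card_univ
      simp at this; omega
    have hmul : (l - 2) * A + 2 * A = l * A := by
      have h' : l - 2 + 2 = l := by omega
      calc (l - 2) * A + 2 * A = (l - 2 + 2) * A := (Nat.add_mul _ _ _).symm
      _ = l * A := by rw [h']
    omega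


lemma sum_parity (k l u v : ℕ) (a : Fin k → ℕ) (b : Fin l → ℕ)
    (hsa : ∑ i, a i = u) (hsb : ∑ j, b j = v) :
    ((∑ i, ∑ j, Nat.gcd (a i) (b j)) + u * v + l * u + k * v) % 2 = 0 := by
  have hbig : Even (∑ i, ∑ j, (Nat.gcd (a i) (b j) + a i * b j + a i + b j)) := by
    apply Finset.even_sum
    intro i _
    apply Finset.even_sum
    intro j _
    exact Nat.even_iff.mpr (gcd_parity _ _)
  have e1 : ∑ i, ∑ j, a i * b j = u * v := by
    rw [← hsa, ← hsb]; exact (Finset.sum_mul_sum _ _ _ _).symm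
  have e2 : ∑ _i : Fin k, ∑ j, b j = k * v := by
    simp [hsb, Finset.sum_const, Finset.card_univ]
  have e3 : ∑ i : Fin k, ∑ _j : Fin l, a i = l * u := by
    simp only [Finset.sum_const, Finset.card_univ, Fintype.card_fin, smul_eq_mul]
    rw [← Finset.mul_sum, hsa]
  have hsplit : (∑ i, ∑ j, (Nat.gcd (a i) (b j) + a i * b j + a i + b j))
      = (∑ i, ∑ j, Nat.gcd (a i) (b j)) + u * v + l * u + k * v := by
    simp only [Finset.sum_add_distrib]
    rw [e1, e2, e3]
  rw [hsplit] at hbig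
  exact Nat.even_iff.mp hbig

lemma key (m n r k l : ℕ) (hr : 0 < r) (hm : 0 < m) (hn : 0 < n) (hmn : Nat.gcd m n = 1)
    (a : Fin k → ℕ) (ha : ∀ i, 0 < a i) (hsa : ∑ i, a i = r * m)
    (b : Fin l → ℕ) (hb : ∀ j, 0 < b j) (hsb : ∑ j, b j = r * n) :
    (∑ i, ∑ j, Nat.gcd (a i) (b j)) + r * m + r * n ≤ l * (r * m) + k * (r * n) ∨
    (∑ i, ∑ j, Nat.gcd (a i) (b j)) + r * m + r * n = l * (r * m) + k * (r * n) + r := by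
  classical
  have hu : 0 < r * m := Nat.mul_pos hr hm
  have hv : 0 < r * n := Nat.mul_pos hr hn
  have hgcdr : Nat.gcd (r * m) (r * n) = r := by rw [Nat.gcd_mul_left, hmn, mul_one]
  have hk : 0 < k := by
    rcases Nat.eq_zero_or_pos k with h | h
    · subst h; simp at hsa; omega
    · exact h
  have hl : 0 < l := by
    rcases Nat.eq_zero_or_pos l with h | h
    · subst h; simp at hsb; omega
    · exact h
  by_cases hk1 : k = 1
  · subst hk1
    rw [Fin.sum_univ_one] at hsa
    have hgoal : (∑ i : Fin 1, ∑ j, Nat.gcd (a i) (b j)) = ∑ j, Nat.gcd (r * m) (b j) := by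
      rw [Fin.sum_univ_one]; exact Finset.sum_congr rfl (fun j _ => by rw [hsa])
    rw [hgoal]
    rcases key1 (r * m) (r * n) r l hu b hb hsb hgcdr with h | h
    · left; linarith
    · right; linarith
  by_cases hl1 : l = 1
  · subst hl1
    rw [Fin.sum_univ_one] at hsb
    have hgoal : (∑ i, ∑ j : Fin 1, Nat.gcd (a i) (b j)) = ∑ i, Nat.gcd (r * n) (a i) := by
      refine Finset.sum_congr rfl (fun i _ => ?_)
      rw [Fin.sum_univ_one, hsb, Nat.gcd_comm]
    rw [hgoal]
    rcases key1 (r * n) (r * m) r k hv a ha hsa (by rw [Nat.gcd_comm]; exact hgcdr) with h | h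
    · left; linarith
    · right; linarith
  · have hk2 : 2 ≤ k := by omega
    have hl2 : 2 ≤ l := by omega
    left
    rw [Finset.sum_comm]
    obtain ⟨j0, _, hj0min⟩ := Finset.exists_min_image Finset.univ b
      ⟨⟨0, hl⟩, Finset.mem_univ _⟩
    obtain ⟨j1, hj1ne⟩ := Fintype.exists_ne_of_one_lt_card
      (by rw [Fintype.card_fin]; omega) j0
    have h2b : 2 * b j0 ≤ r * n := by
      have hle : b j0 ≤ b j1 := hj0min j1 (Finset.mem_univ _)
      have hsp : b j0 + ∑ j ∈ Finset.univ.erase j0, b j = r * n := by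
        rw [← hsb]; exact Finset.add_sum_erase _ b (Finset.mem_univ j0)
      have hj1m : j1 ∈ Finset.univ.erase j0 := Finset.mem_erase.mpr ⟨hj1ne, Finset.mem_univ _⟩
      have h1s : b j1 ≤ ∑ j ∈ Finset.univ.erase j0, b j :=
        Finset.single_le_sum (fun _ _ => Nat.zero_le _) hj1m
      omega
    have hrow : ∀ j, (∑ i, Nat.gcd (a i) (b j)) ≤ r * m := by
      intro j
      calc ∑ i, Nat.gcd (a i) (b j) ≤ ∑ i, a i :=
        Finset.sum_le_sum (fun i _ => Nat.gcd_le_left _ (ha i))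
      _ = r * m := hsa
    have hrow0 : (∑ i, Nat.gcd (a i) (b j0)) ≤ k * b j0 := by
      have := Finset.sum_le_card_nsmul Finset.univ (fun i => Nat.gcd (a i) (b j0)) (b j0)
        (fun i _ => Nat.gcd_le_right _ (hb j0))
      rwa [Finset.card_univ, Fintype.card_fin, smul_eq_mul] at this
    have hsplit : (∑ j, ∑ i, Nat.gcd (a i) (b j))
        = (∑ i, Nat.gcd (a i) (b j0))
          + ∑ j ∈ Finset.univ.erase j0, ∑ i, Nat.gcd (a i) (b j) :=
      (Finset.add_sum_erase _ _ (Finset.mem_univ j0)).symm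
    have hrest : ∑ j ∈ Finset.univ.erase j0, (∑ i, Nat.gcd (a i) (b j)) ≤ (l - 1) * (r * m) := by
      have := Finset.sum_le_card_nsmul (Finset.univ.erase j0)
        (fun j => ∑ i, Nat.gcd (a i) (b j)) (r * m) (fun j _ => hrow j)
      rwa [Finset.card_erase_of_mem (Finset.mem_univ j0), Finset.card_univ,
        Fintype.card_fin, smul_eq_mul] at this
    have hmul : (l - 1) * (r * m) + r * m = l * (r * m) := by
      have h' : l - 1 + 1 = l := by omega
      calc (l - 1) * (r * m) + r * m = (l - 1) * (r * m) + 1 * (r * m) := by ring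
      _ = (l - 1 + 1) * (r * m) := (Nat.add_mul _ _ _).symm
      _ = l * (r * m) := by rw [h']
    have hkb : k * b j0 + r * n ≤ k * (r * n) := by
      have e1 : k * (2 * b j0) ≤ k * (r * n) := Nat.mul_le_mul_left k h2b
      have e2 : 2 * (r * n) ≤ k * (r * n) := Nat.mul_le_mul_right (r * n) hk2
      have e3 : k * (2 * b j0) = 2 * (k * b j0) := by ring
      linarith
    linarith [hsplit, hrest, hrow0, hmul, hkb]

/-- Section 2.3 (refined by Proposition 2.5): if a pair of pairs of partitions of
`(rm, rn)` satisfies the genus-one condition `δ₀ + δ_∞ = 2δ_max − r` and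
`δ₀ ≥ δ_∞`, then either `δ₀ = δ_∞ = δ_max − r/2` (with `r` even) or
`δ₀ = δ_max` and `δ_∞ = δ_max − r`. -/
theorem genus_one_delta_dichotomy
    (m n r k l k' l' : ℕ) (hm : 0 < m) (hn : 0 < n) (hr : 0 < r)
    (hmn : Nat.gcd m n = 1) (hmlen : m ≤ n)
    (a : Fin k → ℕ) (ha : ∀ i, 0 < a i) (hsa : ∑ i, a i = r * m)
    (b : Fin l → ℕ) (hb : ∀ j, 0 < b j) (hsb : ∑ j, b j = r * n)
    (a' : Fin k' → ℕ) (ha' : ∀ i, 0 < a' i) (hsa' : ∑ i, a' i = r * m)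
    (b' : Fin l' → ℕ) (hb' : ∀ j, 0 < b' j) (hsb' : ∑ j, b' j = r * n)
    (hgenus :
      ((∑ i, ∑ j, Nat.gcd (a i) (b j) : ℕ) : ℤ)
          + ((∑ i, ∑ j, Nat.gcd (a' i) (b' j) : ℕ) : ℤ)
        = ((l : ℤ) + l' - 2) * (r * m) + ((k : ℤ) + k' - 2) * (r * n))
    (hord :
      ((∑ i, ∑ j, Nat.gcd (a i) (b j) : ℕ) : ℤ) - (l : ℤ) * (r * m) - (k : ℤ) * (r * n)
        ≥ ((∑ i, ∑ j, Nat.gcd (a' i) (b' j) : ℕ) : ℤ) - (l' : ℤ) * (r * m)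
            - (k' : ℤ) * (r * n)) :
    (Even r ∧
      ((∑ i, ∑ j, Nat.gcd (a i) (b j) : ℕ) : ℤ)
          = ((l : ℤ) - 1) * (r * m) + ((k : ℤ) - 1) * (r * n) ∧
      ((∑ i, ∑ j, Nat.gcd (a' i) (b' j) : ℕ) : ℤ)
          = ((l' : ℤ) - 1) * (r * m) + ((k' : ℤ) - 1) * (r * n)) ∨
    (((∑ i, ∑ j, Nat.gcd (a i) (b j) : ℕ) : ℤ)
          = ((l : ℤ) - 1) * (r * m) + ((k : ℤ) - 1) * (r * n) + r ∧
      ((∑ i, ∑ j, Nat.gcd (a' i) (b' j) : ℕ) : ℤ)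
          = ((l' : ℤ) - 1) * (r * m) + ((k' : ℤ) - 1) * (r * n) - r) := by
  set S : ℕ := ∑ i, ∑ j, Nat.gcd (a i) (b j) with hS
  set S' : ℕ := ∑ i, ∑ j, Nat.gcd (a' i) (b' j) with hS'
  -- δ₀ ≥ δ_max - r/2, as a natural-number inequality
  have hDZ : ((l * (r * m) + k * (r * n) : ℕ) : ℤ) ≤ ((S + r * m + r * n : ℕ) : ℤ) := by
    push_cast
    linarith [hord, hgenus]
  have hDnat : l * (r * m) + k * (r * n) ≤ S + r * m + r * n := by exact_mod_cast hDZ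
  have hkey := key m n r k l hr hm hn hmn a ha hsa b hb hsb
  rw [← hS] at hkey
  rcases hkey with h | h
  · -- S + u + v = l u + k v : case δ₀ = δ_max - r/2, must show r even
    have heq : S + r * m + r * n = l * (r * m) + k * (r * n) := le_antisymm h hDnat
    have hre : Even r := by
      by_contra hodd
      rw [Nat.even_iff] at hodd
      have hr2 : r % 2 = 1 := by omega
      have hpar := sum_parity k l (r * m) (r * n) a b hsa hsb
      rw [← hS] at hpar
      have hun : (r * m) % 2 = m % 2 := by
        have h1 := Nat.mul_mod r m 2
        rw [hr2, one_mul] at h1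
        omega
      have hvn : (r * n) % 2 = n % 2 := by
        have h1 := Nat.mul_mod r n 2
        rw [hr2, one_mul] at h1
        omega
      have hP := Nat.mul_mod (r * m) (r * n) 2
      rw [hun, hvn] at hP
      have hcop : ¬ (m % 2 = 0 ∧ n % 2 = 0) := by
        rintro ⟨h1, h2⟩
        have := Nat.dvd_gcd (show 2 ∣ m by omega) (show 2 ∣ n by omega)
        rw [hmn] at this
        omega
      rcases Nat.mod_two_eq_zero_or_one m with hm2 | hm2
      · have hn2 : n % 2 = 1 := by
          rcases Nat.mod_two_eq_zero_or_one n with h' | h'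
          · exact absurd ⟨hm2, h'⟩ hcop
          · exact h'
        rw [hm2, zero_mul] at hP
        omega
      · rw [hm2, one_mul] at hP
        rcases Nat.mod_two_eq_zero_or_one n with hn2 | hn2 <;> omega
    refine Or.inl ⟨hre, ?_, ?_⟩
    · have : ((S + r * m + r * n : ℕ) : ℤ) = ((l * (r * m) + k * (r * n) : ℕ) : ℤ) := by
        exact_mod_cast heq
      push_cast at this
      linarith
    · have : ((S + r * m + r * n : ℕ) : ℤ) = ((l * (r * m) + k * (r * n) : ℕ) : ℤ) := by
        exact_mod_cast heq
      push_cast at this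
      linarith [hgenus]
  · -- S + u + v = l u + k v + r : case δ₀ = δ_max
    have hZ : ((S + r * m + r * n : ℕ) : ℤ) = ((l * (r * m) + k * (r * n) + r : ℕ) : ℤ) := by
      exact_mod_cast h
    push_cast at hZ
    refine Or.inr ⟨by linarith, by linarith [hgenus]⟩
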